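/- If G is an almost bipartite graph that is not a König-Egerváry graph, with unique odd cycle C, then V(C) ∩ N[diadem(G)] = ∅ (equivalently, N[V(C)] ∩ diadem(G) = ∅). -/

import Mathlib

namespace AlmostBipartite

variable {V : Type*}

/-- The (open) neighborhood `N(X)` of a set of vertices: all vertices having a neighbor in `X`. -/
def nbhd (G : SimpleGraph V) (X : Set V) : Set V := {v | ∃ x ∈ X, G.Adj v x}

/-- The closed neighborhood `N[X] = X ∪ N(X)`. -/
def closedNbhd (G : SimpleGraph V) (X : Set V) : Set V := X ∪ nbhd G X

/-- A set of vertices is independent: no two of its vertices are adjacent. -/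
def IsIndepSet (G : SimpleGraph V) (S : Set V) : Prop :=
  ∀ ⦃a⦄, a ∈ S → ∀ ⦃b⦄, b ∈ S → ¬G.Adj a b

/-- The difference `d(X) = |X| - |N(X)|`. -/
noncomputable def diffOf (G : SimpleGraph V) (X : Set V) : ℤ :=
  (X.ncard : ℤ) - ((nbhd G X).ncard : ℤ)

/-- The critical difference `d(G)`: maximum of `d(I)` over independent sets `I`. -/
noncomputable def critDiff (G : SimpleGraph V) : ℤ :=
  sSup (diffOf G '' {S | IsIndepSet G S})

/-- A critical independent set: an independent set `A` with `d(A) = d(G)`. -/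
def IsCritIndep (G : SimpleGraph V) (A : Set V) : Prop :=
  IsIndepSet G A ∧ diffOf G A = critDiff G

/-- `diadem G` is the union of all critical independent sets of `G`. -/
def diadem (G : SimpleGraph V) : Set V := ⋃₀ {A | IsCritIndep G A}

/-- A maximum critical independent set: a critical independent set of maximum cardinality. -/
def IsMaxCritIndep (G : SimpleGraph V) (A : Set V) : Prop :=
  IsCritIndep G A ∧ ∀ B : Set V, IsCritIndep G B → B.ncard ≤ A.ncard

/-- `nucleus G` is the intersection of all maximum critical independent sets of `G`. -/
def nucleus (G : SimpleGraph V) : Set V := ⋂₀ {A | IsMaxCritIndep G A}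

/-- The independence number `α(G)`. -/
noncomputable def indepNum (G : SimpleGraph V) : ℕ :=
  sSup {n | ∃ S : Set V, IsIndepSet G S ∧ S.ncard = n}

/-- The critical independence number `α'(G)`: cardinality of a maximum critical independent set. -/
noncomputable def critIndepNum (G : SimpleGraph V) : ℕ :=
  sSup {n | ∃ S : Set V, IsCritIndep G S ∧ S.ncard = n}

/-- A maximum independent set. -/
def IsMaxIndep (G : SimpleGraph V) (S : Set V) : Prop :=
  IsIndepSet G S ∧ S.ncard = indepNum G

/-- `corona G` is the union of all maximum independent sets of `G`. -/
def corona (G : SimpleGraph V) : Set V := ⋃₀ {S | IsMaxIndep G S}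

/-- `core G` is the intersection of all maximum independent sets of `G`. -/
def core (G : SimpleGraph V) : Set V := ⋂₀ {S | IsMaxIndep G S}

/-- The matching number `μ(G)`: maximum size of a matching in `G`. -/
noncomputable def matchNum (G : SimpleGraph V) : ℕ :=
  sSup {n | ∃ M : SimpleGraph.Subgraph G, M.IsMatching ∧ M.edgeSet.ncard = n}

/-- `G` is a König-Egerváry graph if `α(G) + μ(G) = n(G)`. -/
def KonigEgervary (G : SimpleGraph V) : Prop :=
  indepNum G + matchNum G = Nat.card V

/-- A closed walk which is an odd cycle. -/
def IsOddCycleWalk (G : SimpleGraph V) {u : V} (c : G.Walk u u) : Prop :=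
  c.IsCycle ∧ Odd c.length

/-- `c` is the unique odd cycle of `G`: it is an odd cycle, and every odd cycle of `G`
has the same edge set as `c`.  A graph admitting such `c` is almost bipartite. -/
def IsUniqueOddCycle (G : SimpleGraph V) {u : V} (c : G.Walk u u) : Prop :=
  IsOddCycleWalk G c ∧
    ∀ (w : V) (c' : G.Walk w w), IsOddCycleWalk G c' →
      {e | e ∈ c'.edges} = {e | e ∈ c.edges}

/-- The vertex-deleted subgraph `G - v`. -/
def deleteVert (G : SimpleGraph V) (v : V) := G.induce {w | w ≠ v}

/-- `ϱ_v(G)`: the number of vertices `v` such that `G - v` is a König-Egerváry graph. -/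
noncomputable def rhoV (G : SimpleGraph V) : ℕ :=
  {v : V | KonigEgervary (deleteVert G v)}.ncard

end AlmostBipartite

open AlmostBipartite


set_option linter.unusedSectionVars false
set_option maxHeartbeats 1000000

section ABaux

open SimpleGraph AlmostBipartite

/- ### Walk lemmas (general vertex type) -/

section Walks
variable {U : Type*} {G : SimpleGraph U}

lemma AB_exists_edge_of_mem_support {a b x : U} (p : G.Walk a b) (hp : p.length ≠ 0)
    (hx : x ∈ p.support) : ∃ y, s(x, y) ∈ p.edges := by
  induction p with
  | nil => simp at hp
  | cons h q ih =>
    rename_i s t r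
    rw [Walk.support_cons, List.mem_cons] at hx
    rcases hx with rfl | hx
    · exact ⟨t, by rw [Walk.edges_cons]; exact List.mem_cons_self⟩
    · by_cases hq : q.length = 0
      · cases q with
        | nil =>
          simp only [Walk.support_nil, List.mem_singleton] at hx
          subst hx
          exact ⟨s, by simp [Walk.edges_cons, Sym2.eq_swap]⟩
        | cons h' q' => simp [Walk.length_cons] at hq
      · obtain ⟨y, hy⟩ := ih hq hx
        exact ⟨y, by rw [Walk.edges_cons]; exact List.mem_cons_of_mem _ hy⟩

lemma AB_edge_head [DecidableEq U] {a b c : U} (r : G.Walk a b)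
    (hcount : List.count a r.support = 1) (he : s(a, c) ∈ r.edges) :
    ∃ (h : G.Adj a c) (r' : G.Walk c b), r = SimpleGraph.Walk.cons h r' := by
  cases r with
  | nil => simp at he
  | cons h' r₁ =>
    rename_i y
    rw [Walk.edges_cons, List.mem_cons] at he
    rw [Walk.support_cons, List.count_cons_self] at hcount
    rcases he with he | he
    · rcases Sym2.eq_iff.mp he with ⟨-, rfl⟩ | ⟨h1, rfl⟩
      · exact ⟨h', r₁, rfl⟩
      · exact absurd h1 h'.ne
    · exfalso
      have ha1 : a ∈ r₁.support := Walk.fst_mem_support_of_mem_edges r₁ he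
      have := List.count_pos_iff.mpr ha1
      omega

lemma AB_odd_split {n₀ : ℕ} (hodd : Odd n₀)
    (hmin : ∀ m, m < n₀ → ∀ (x : U) (r : G.Walk x x), r.length = m → ¬ Odd m)
    {x y : U} (r1 : G.Walk x x) (r2 : G.Walk y y) (hsum : r1.length + r2.length = n₀)
    (h1 : 1 ≤ r1.length) (h2 : 1 ≤ r2.length) : False := by
  rcases Nat.even_or_odd r1.length with he | ho
  · rcases Nat.even_or_odd r2.length with he2 | ho2
    · exact (Nat.not_odd_iff_even.mpr (hsum ▸ he.add he2)) hodd
    · exact hmin _ (by omega) y r2 rfl ho2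
  · exact hmin _ (by omega) x r1 rfl ho

/-- Any odd closed walk yields an odd cycle. -/
lemma AB_exists_odd_cycle {u : U} (p : G.Walk u u) (hodd : Odd p.length) :
    ∃ (w : U) (q : G.Walk w w), q.IsCycle ∧ Odd q.length := by
  classical
  have hex : ∃ n, ∃ (w : U) (q : G.Walk w w), q.length = n ∧ Odd n := ⟨p.length, u, p, rfl, hodd⟩
  obtain ⟨w, q, hlen, hoddn⟩ := Nat.find_spec hex
  have hmin : ∀ m, m < Nat.find hex → ∀ (x : U) (r : G.Walk x x), r.length = m → ¬ Odd m :=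
    fun m hm x r hr ho => Nat.find_min hex hm ⟨x, r, hr, ho⟩
  set n₀ := Nat.find hex with hn₀
  cases q with
  | nil =>
    rw [← hlen] at hoddn
    simp at hoddn
  | cons h q' =>
    rename_i v
    rw [Walk.length_cons] at hlen
    refine ⟨w, Walk.cons h q', ?_, by rw [Walk.length_cons, hlen]; exact hoddn⟩
    have hw_end : w ∈ q'.support := Walk.end_mem_support q'
    have hcount_w : List.count w q'.support = 1 := by
      by_contra hcw
      have h2 : 2 ≤ List.count w q'.support := by
        have := List.count_pos_iff.mpr hw_end; omega
      have hspec : (q'.takeUntil w hw_end).append (q'.dropUntil w hw_end) = q' :=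
        q'.take_spec hw_end
      have hlensum : (q'.takeUntil w hw_end).length + (q'.dropUntil w hw_end).length
          = q'.length := by rw [← Walk.length_append, hspec]
      have hct : List.count w (q'.takeUntil w hw_end).support = 1 :=
        q'.count_support_takeUntil_eq_one hw_end
      have hcs : List.count w q'.support
          = List.count w (q'.takeUntil w hw_end).support
            + List.count w (q'.dropUntil w hw_end).support.tail := by
        conv_lhs => rw [← hspec]
        rw [Walk.support_append, List.count_append]
      have hd_ne : (q'.dropUntil w hw_end).length ≠ 0 := by
        intro h0
        rw [Walk.nil_iff_eq_nil.mp (Walk.length_eq_zero_iff.mp h0)] at hcs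
        simp only [Walk.support_nil, List.tail_cons, List.count_nil] at hcs
        omega
      exact AB_odd_split hoddn hmin (Walk.cons h (q'.takeUntil w hw_end))
        (q'.dropUntil w hw_end) (by rw [Walk.length_cons]; omega)
        (by rw [Walk.length_cons]; omega) (by omega)
    have hcount_x : ∀ x, x ≠ w → List.count x q'.support ≤ 1 := by
      intro x hxw
      by_contra hcx
      have hx_mem : x ∈ q'.support := by
        rw [← List.count_pos_iff]; omega
      have hspec : (q'.takeUntil x hx_mem).append (q'.dropUntil x hx_mem) = q' :=
        q'.take_spec hx_mem
      have hlensum : (q'.takeUntil x hx_mem).length + (q'.dropUntil x hx_mem).length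
          = q'.length := by rw [← Walk.length_append, hspec]
      have hct : List.count x (q'.takeUntil x hx_mem).support = 1 :=
        q'.count_support_takeUntil_eq_one hx_mem
      have hcs : List.count x q'.support
          = List.count x (q'.takeUntil x hx_mem).support
            + List.count x (q'.dropUntil x hx_mem).support.tail := by
        conv_lhs => rw [← hspec]
        rw [Walk.support_append, List.count_append]
      have hx_tail : x ∈ (q'.dropUntil x hx_mem).support.tail := by
        rw [← List.count_pos_iff]; omega
      revert hx_tail
      generalize hdd : q'.dropUntil x hx_mem = d
      rw [hdd] at hlensum
      intro hx_tail
      cases d with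
      | nil => simp at hx_tail
      | cons h₂ d₂ =>
        rename_i z
        rw [Walk.support_cons, List.tail_cons] at hx_tail
        have hspec2 : (d₂.takeUntil x hx_tail).append (d₂.dropUntil x hx_tail) = d₂ :=
          d₂.take_spec hx_tail
        have hlensum2 : (d₂.takeUntil x hx_tail).length + (d₂.dropUntil x hx_tail).length
            = d₂.length := by rw [← Walk.length_append, hspec2]
        have hlc : (Walk.cons h₂ d₂).length = d₂.length + 1 := Walk.length_cons _ _
        exact AB_odd_split hoddn hmin
          (Walk.cons h₂ (d₂.takeUntil x hx_tail))
          (Walk.cons h ((q'.takeUntil x hx_mem).append (d₂.dropUntil x hx_tail)))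
          (by rw [Walk.length_cons, Walk.length_cons, Walk.length_append]; omega)
          (by rw [Walk.length_cons]; omega) (by rw [Walk.length_cons]; omega)
    have hnodup : q'.support.Nodup := by
      rw [List.nodup_iff_count_le_one]
      intro a
      by_cases ha : a = w
      · rw [ha, hcount_w]
      · exact hcount_x a ha
    rw [Walk.cons_isCycle_iff]
    refine ⟨Walk.IsPath.mk' hnodup, ?_⟩
    intro hse
    have hse' : s(w, v) ∈ q'.reverse.edges := by
      rw [Walk.edges_reverse, List.mem_reverse]; exact hse
    have hcr : List.count w q'.reverse.support = 1 := by
      rw [Walk.support_reverse, List.count_reverse]; exact hcount_w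
    obtain ⟨h2, r', hr'⟩ := AB_edge_head q'.reverse hcr hse'
    have hrl : r'.length + 1 = q'.length := by
      have := congrArg Walk.length hr'
      rw [Walk.length_reverse, Walk.length_cons] at this
      omega
    have hn3 : 3 ≤ n₀ := by
      rcases hoddn with ⟨k, hk⟩
      rcases Nat.eq_zero_or_pos k with rfl | hkpos
      · exfalso
        have hq0 : q'.length = 0 := by omega
        have hvw : v = w := Walk.eq_of_length_eq_zero hq0
        subst hvw
        exact G.irrefl h
      · omega
    exact hmin (n₀ - 2) (by omega) v r' (by omega)
      (by rcases hoddn with ⟨k, hk⟩; exact ⟨k - 1, by omega⟩)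

/-- A graph with no odd closed walk has a proper 2-coloring. -/
lemma AB_exists_coloring
    (h : ∀ (x : U) (p : G.Walk x x), ¬ Odd p.length) :
    ∃ col : U → Bool, ∀ a b, G.Adj a b → col a ≠ col b := by
  classical
  have hreach : ∀ v : U, G.Reachable v (G.connectedComponentMk v).out := fun v =>
    (ConnectedComponent.exact (Quot.out_eq (G.connectedComponentMk v))).symm
  refine ⟨fun v => decide (Odd ((hreach v).some.length)), ?_⟩
  intro a b hab hcol
  rw [decide_eq_decide] at hcol
  have hcomp : (G.connectedComponentMk a).out = (G.connectedComponentMk b).out := by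
    rw [ConnectedComponent.connectedComponentMk_eq_of_adj hab]
  set pa := (hreach a).some with hpa
  set pb := (hreach b).some with hpb
  have hclosed := h _ ((pa.reverse.append (Walk.cons hab (pb.copy rfl hcomp.symm))))
  rw [Walk.length_append, Walk.length_reverse, Walk.length_cons, Walk.length_copy,
    Nat.not_odd_iff_even] at hclosed
  rcases hclosed with ⟨k, hk⟩
  rw [Nat.odd_iff, Nat.odd_iff] at hcol
  omega

end Walks

/- ### Critical independent set and counting lemmas -/

section Counting
variable {V : Type*} [Fintype V] {G : SimpleGraph V}

lemma AB_diff_le_crit {S : Set V} (hS : AlmostBipartite.IsIndepSet G S) : diffOf G S ≤ critDiff G :=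
  le_csSup ((Set.toFinite {S | AlmostBipartite.IsIndepSet G S}).image _).bddAbove (Set.mem_image_of_mem _ hS)

lemma AB_crit_matchable {A : Set V} (hA : IsCritIndep G A) {S : Set V} (hS : S ⊆ nbhd G A) :
    S.ncard ≤ (nbhd G S ∩ A).ncard := by
  set A' := A \ nbhd G S with hA'
  have hind : AlmostBipartite.IsIndepSet G A' := fun a ha b hb => hA.1 ha.1 hb.1
  have hd : diffOf G A' ≤ diffOf G A := (AB_diff_le_crit hind).trans_eq hA.2.symm
  have h1 : (A'.ncard : ℤ) = (A.ncard : ℤ) - ((nbhd G S ∩ A).ncard : ℤ) := by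
    have : A' = A \ (nbhd G S ∩ A) := by
      ext v; simp only [hA', Set.mem_diff, Set.mem_inter_iff]; tauto
    rw [this, Set.ncard_diff Set.inter_subset_right]
    have := Set.ncard_le_ncard (Set.inter_subset_right (s := nbhd G S) (t := A)) (Set.toFinite _)
    omega
  have hsub : nbhd G A' ⊆ nbhd G A \ S := by
    rintro v ⟨x, hx, hvx⟩
    refine ⟨⟨x, hx.1, hvx⟩, fun hvS => hx.2 ⟨v, hvS, hvx.symm⟩⟩
  have h2 : ((nbhd G A').ncard : ℤ) ≤ ((nbhd G A).ncard : ℤ) - (S.ncard : ℤ) := by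
    have := Set.ncard_le_ncard hsub (Set.toFinite _)
    rw [Set.ncard_diff hS] at this
    have := Set.ncard_le_ncard hS (Set.toFinite _)
    omega
  simp only [diffOf] at hd
  omega

lemma AB_crit_expand {A : Set V} (hA : IsCritIndep G A) {I : Set V} (hI : AlmostBipartite.IsIndepSet G I)
    (hIW : I ⊆ (closedNbhd G A)ᶜ) : I.ncard ≤ (nbhd G I ∩ (closedNbhd G A)ᶜ).ncard := by
  have hInA : ∀ i ∈ I, ∀ a ∈ A, ¬ G.Adj i a := by
    intro i hi a ha hadj
    exact hIW hi (Or.inr ⟨a, ha, hadj⟩)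
  have hdisj : Disjoint A I := by
    rw [Set.disjoint_right]; intro i hi hiA; exact hIW hi (Or.inl hiA)
  have hind : AlmostBipartite.IsIndepSet G (A ∪ I) := by
    rintro a (ha | ha) b (hb | hb)
    · exact hA.1 ha hb
    · exact fun h => hInA b hb a ha h.symm
    · exact hInA a ha b hb
    · exact hI ha hb
  have hd : diffOf G (A ∪ I) ≤ diffOf G A := (AB_diff_le_crit hind).trans_eq hA.2.symm
  have h1 : ((A ∪ I).ncard : ℤ) = (A.ncard : ℤ) + I.ncard := by
    rw [Set.ncard_union_eq hdisj]; push_cast; ring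
  have hnu : nbhd G (A ∪ I) = nbhd G A ∪ (nbhd G I \ nbhd G A) := by
    ext v
    constructor
    · rintro ⟨x, (hx | hx), hvx⟩
      · exact Or.inl ⟨x, hx, hvx⟩
      · by_cases h : v ∈ nbhd G A
        · exact Or.inl h
        · exact Or.inr ⟨⟨x, hx, hvx⟩, h⟩
    · rintro (⟨x, hx, hvx⟩ | ⟨⟨x, hx, hvx⟩, -⟩)
      · exact ⟨x, Or.inl hx, hvx⟩
      · exact ⟨x, Or.inr hx, hvx⟩
  have h2 : ((nbhd G (A ∪ I)).ncard : ℤ) =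
      ((nbhd G A).ncard : ℤ) + ((nbhd G I \ nbhd G A).ncard : ℤ) := by
    rw [hnu, Set.ncard_union_eq (disjoint_sdiff_self_right)]; push_cast; ring
  have h3 : nbhd G I \ nbhd G A ⊆ nbhd G I ∩ (closedNbhd G A)ᶜ := by
    rintro v ⟨hvI, hvA⟩
    refine ⟨hvI, fun hv => ?_⟩
    rcases hv with hv | hv
    · obtain ⟨i, hi, hvi⟩ := hvI
      exact hInA i hi v hv hvi.symm
    · exact hvA hv
  have h4 := Set.ncard_le_ncard h3 (Set.toFinite _)
  simp only [diffOf] at hd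
  omega

lemma AB_hall {D T : Set V}
    (h : ∀ S : Set V, S ⊆ D → S.ncard ≤ (nbhd G S ∩ T).ncard) :
    ∃ f : V → V, Set.InjOn f D ∧ ∀ x ∈ D, G.Adj x (f x) ∧ f x ∈ T := by
  classical
  set t : ↥D → Finset V := fun x => ((G.neighborSet ↑x ∩ T).toFinite.toFinset) with ht
  have key : ∀ s : Finset ↥D, s.card ≤ (s.biUnion t).card := by
    intro s
    set S : Set V := ↑(s.image (Subtype.val)) with hSdef
    have hSD : S ⊆ D := by
      rintro v hv
      simp only [hSdef, Finset.coe_image, Set.mem_image, Finset.mem_coe] at hv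
      obtain ⟨x, -, rfl⟩ := hv; exact x.2
    have hcard : s.card = S.ncard := by
      rw [hSdef, Set.ncard_coe_finset, Finset.card_image_of_injective _ Subtype.val_injective]
    have heq : nbhd G S ∩ T = ↑(s.biUnion t) := by
      ext v
      simp only [hSdef, nbhd, Set.mem_inter_iff, Set.mem_setOf_eq, Finset.coe_image,
        Set.mem_image, Finset.mem_coe, Finset.coe_biUnion, Set.mem_iUnion, ht,
        Set.Finite.mem_toFinset, SimpleGraph.mem_neighborSet]
      constructor
      · rintro ⟨⟨x, ⟨y, hy, rfl⟩, hvx⟩, hvT⟩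
        exact ⟨y, hy, hvx.symm, hvT⟩
      · rintro ⟨y, hy, hvy, hvT⟩
        exact ⟨⟨y, ⟨y, hy, rfl⟩, hvy.symm⟩, hvT⟩
    calc s.card = S.ncard := hcard
      _ ≤ (nbhd G S ∩ T).ncard := h S hSD
      _ = (s.biUnion t).card := by rw [heq, Set.ncard_coe_finset]
  obtain ⟨f₀, hinj, hmem⟩ := (Finset.all_card_le_biUnion_card_iff_exists_injective t).mp key
  refine ⟨fun v => if h : v ∈ D then f₀ ⟨v, h⟩ else v, ?_, ?_⟩
  · intro a ha b hb hab
    simp only [dif_pos ha, dif_pos hb] at hab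
    simpa using hinj hab
  · intro x hx
    have := hmem ⟨x, hx⟩
    simp only [ht, Set.Finite.mem_toFinset, Set.mem_inter_iff, SimpleGraph.mem_neighborSet] at this
    simp only [dif_pos hx]
    exact this

lemma AB_matching_of_fn {D : Set V} {f : V → V}
    (hadj : ∀ x ∈ D, G.Adj x (f x)) (hinj : Set.InjOn f D)
    (hout : ∀ x ∈ D, f x ∉ D) :
    ∃ M : SimpleGraph.Subgraph G, M.IsMatching ∧ M.edgeSet.ncard = D.ncard := by
  refine ⟨⟨D ∪ f '' D, fun a b => (a ∈ D ∧ b = f a) ∨ (b ∈ D ∧ a = f b), ?_, ?_, ?_⟩, ?_, ?_⟩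
  · rintro a b (⟨ha, rfl⟩ | ⟨hb, rfl⟩)
    · exact hadj a ha
    · exact (hadj b hb).symm
  · rintro a b (⟨ha, rfl⟩ | ⟨hb, rfl⟩)
    · exact Or.inl ha
    · exact Or.inr ⟨b, hb, rfl⟩
  · constructor; rintro a b (⟨ha, rfl⟩ | ⟨hb, rfl⟩)
    · exact Or.inr ⟨ha, rfl⟩
    · exact Or.inl ⟨hb, rfl⟩
  · rintro v (hv | ⟨x, hx, rfl⟩)
    · refine ⟨f v, Or.inl ⟨hv, rfl⟩, ?_⟩
      rintro y (⟨-, rfl⟩ | ⟨hy, rfl⟩)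
      · rfl
      · exact absurd hv (hout y hy)
    · refine ⟨x, Or.inr ⟨hx, rfl⟩, ?_⟩
      rintro y (⟨hfx, rfl⟩ | ⟨hy, hfy⟩)
      · exact absurd hfx (hout x hx)
      · exact (hinj hy hx hfy.symm)
  · have hedge : (⟨D ∪ f '' D, fun a b => (a ∈ D ∧ b = f a) ∨ (b ∈ D ∧ a = f b),
        by rintro a b (⟨ha, rfl⟩ | ⟨hb, rfl⟩); exacts [hadj a ha, (hadj b hb).symm],
        by rintro a b (⟨ha, rfl⟩ | ⟨hb, rfl⟩); exacts [Or.inl ha, Or.inr ⟨b, hb, rfl⟩],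
        by constructor; rintro a b (⟨ha, rfl⟩ | ⟨hb, rfl⟩); exacts [Or.inr ⟨ha, rfl⟩, Or.inl ⟨hb, rfl⟩]⟩ :
        SimpleGraph.Subgraph G).edgeSet = (fun x => s(x, f x)) '' D := by
      ext e
      induction e using Sym2.ind with
      | _ a b =>
        rw [SimpleGraph.Subgraph.mem_edgeSet]
        constructor
        · rintro (⟨ha, rfl⟩ | ⟨hb, rfl⟩)
          · exact ⟨a, ha, rfl⟩
          · exact ⟨b, hb, Sym2.eq_swap⟩
        · rintro ⟨x, hx, he⟩
          rcases Sym2.eq_iff.mp he.symm with ⟨rfl, rfl⟩ | ⟨h1, h2⟩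
          · exact Or.inl ⟨hx, rfl⟩
          · subst h2; exact Or.inr ⟨hx, h1⟩
    rw [hedge]
    apply Set.ncard_image_of_injOn
    intro x hx y hy hxy
    rcases Sym2.eq_iff.mp hxy with ⟨h1, -⟩ | ⟨h1, h2⟩
    · exact h1
    · exact absurd (h1 ▸ hx) (hout y hy)

lemma AB_indep_bdd : BddAbove {n | ∃ S : Set V, AlmostBipartite.IsIndepSet G S ∧ S.ncard = n} :=
  ⟨Nat.card V, by rintro n ⟨S, -, rfl⟩
                  rw [← Set.ncard_univ]
                  exact Set.ncard_le_ncard (Set.subset_univ S) Set.finite_univ⟩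

lemma AB_match_bdd :
    BddAbove {n | ∃ M : SimpleGraph.Subgraph G, M.IsMatching ∧ M.edgeSet.ncard = n} :=
  ⟨Nat.card (Sym2 V), by rintro n ⟨M, -, rfl⟩
                         rw [← Set.ncard_univ]
                         exact Set.ncard_le_ncard (Set.subset_univ M.edgeSet) Set.finite_univ⟩

lemma AB_le_indepNum {S : Set V} (hS : AlmostBipartite.IsIndepSet G S) : S.ncard ≤ AlmostBipartite.indepNum G :=
  le_csSup AB_indep_bdd ⟨S, hS, rfl⟩

lemma AB_le_matchNum {M : SimpleGraph.Subgraph G} (hM : M.IsMatching) :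
    M.edgeSet.ncard ≤ matchNum G :=
  le_csSup AB_match_bdd ⟨M, hM, rfl⟩

lemma AB_exists_max_indep : ∃ S : Set V, AlmostBipartite.IsIndepSet G S ∧ S.ncard = AlmostBipartite.indepNum G := by
  have h0 : (0 : ℕ) ∈ {n | ∃ S : Set V, AlmostBipartite.IsIndepSet G S ∧ S.ncard = n} :=
    ⟨∅, fun a ha => absurd ha (Set.notMem_empty a), by simp⟩
  exact Nat.sSup_mem ⟨0, h0⟩ AB_indep_bdd

lemma AB_exists_max_matching :
    ∃ M : SimpleGraph.Subgraph G, M.IsMatching ∧ M.edgeSet.ncard = matchNum G := by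
  have h0 : (0 : ℕ) ∈ {n | ∃ M : SimpleGraph.Subgraph G, M.IsMatching ∧ M.edgeSet.ncard = n} :=
    ⟨⊥, fun v hv => absurd hv (by simp), by simp⟩
  exact Nat.sSup_mem ⟨0, h0⟩ AB_match_bdd

lemma AB_indep_matching_le {S : Set V} (hS : AlmostBipartite.IsIndepSet G S)
    {M : SimpleGraph.Subgraph G} (hM : M.IsMatching) :
    S.ncard + M.edgeSet.ncard ≤ Nat.card V := by
  classical
  have hchoice : ∀ e ∈ M.edgeSet, ∃ v, v ∈ e ∧ v ∉ S := by
    intro e he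
    induction e using Sym2.ind with
    | _ a b =>
      rw [SimpleGraph.Subgraph.mem_edgeSet] at he
      have hG := M.adj_sub he
      by_cases ha : a ∈ S
      · exact ⟨b, Sym2.mem_mk_right a b, fun hb => hS ha hb hG⟩
      · exact ⟨a, Sym2.mem_mk_left a b, ha⟩
  set φ : Sym2 V → V := fun e => if h : ∃ v, v ∈ e ∧ v ∉ S then h.choose else (Quot.out e).1
    with hφ
  have hmaps : ∀ e ∈ M.edgeSet, φ e ∈ Sᶜ := by
    intro e he
    have h : ∃ v, v ∈ e ∧ v ∉ S := hchoice e he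
    simp only [hφ, dif_pos h]
    exact h.choose_spec.2
  have hinj : Set.InjOn φ M.edgeSet := by
    intro e1 he1 e2 he2 heq
    have h1 : ∃ v, v ∈ e1 ∧ v ∉ S := hchoice e1 he1
    have h2 : ∃ v, v ∈ e2 ∧ v ∉ S := hchoice e2 he2
    simp only [hφ, dif_pos h1, dif_pos h2] at heq
    obtain ⟨hv1, -⟩ := h1.choose_spec
    obtain ⟨hv2, -⟩ := h2.choose_spec
    rw [heq] at hv1
    obtain ⟨b1, he1'⟩ := Sym2.mem_iff_exists.mp hv1
    obtain ⟨b2, he2'⟩ := Sym2.mem_iff_exists.mp hv2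
    rw [he1', SimpleGraph.Subgraph.mem_edgeSet] at he1
    rw [he2', SimpleGraph.Subgraph.mem_edgeSet] at he2
    have huniq := hM (M.edge_vert he1)
    have : s(h2.choose, b1) = s(h2.choose, b2) := by rw [huniq.unique he1 he2]
    exact he1'.trans (this.trans he2'.symm)
  have h1 : M.edgeSet.ncard ≤ Sᶜ.ncard :=
    Set.ncard_le_ncard_of_injOn φ hmaps hinj (Set.toFinite _)
  have h2 := Set.ncard_add_ncard_compl S
  omega

lemma AB_KE_of {S : Set V} {M : SimpleGraph.Subgraph G} (hS : AlmostBipartite.IsIndepSet G S)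
    (hM : M.IsMatching) (hge : Nat.card V ≤ S.ncard + M.edgeSet.ncard) : KonigEgervary G := by
  obtain ⟨S₀, hS₀, hcS₀⟩ := AB_exists_max_indep (G := G)
  obtain ⟨M₀, hM₀, hcM₀⟩ := AB_exists_max_matching (G := G)
  have hle : AlmostBipartite.indepNum G + matchNum G ≤ Nat.card V := by
    rw [← hcS₀, ← hcM₀]; exact AB_indep_matching_le hS₀ hM₀
  have h1 := AB_le_indepNum hS
  have h2 := AB_le_matchNum hM
  unfold KonigEgervary
  omega

end Counting

/- ### The key lemma -/

section KeyLemma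
variable {V : Type*} [Fintype V] {G : SimpleGraph V}

lemma AB_key (hG : ¬ KonigEgervary G) {u : V} {c : G.Walk u u} (hc : IsUniqueOddCycle G c)
    {A : Set V} (hA : IsCritIndep G A) : ∀ v ∈ c.support, v ∉ closedNbhd G A := by
  intro w hw_sup hw_N
  apply hG
  set W : Set V := (closedNbhd G A)ᶜ with hW
  -- no odd cycle of G has all its support in W
  have noOdd : ∀ (x : V) (q : G.Walk x x), q.IsCycle → Odd q.length →
      ¬ (∀ y ∈ q.support, y ∈ W) := by
    intro x q hq_cyc hq_odd hall
    have hedges := hc.2 x q ⟨hq_cyc, hq_odd⟩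
    have hc_len : c.length ≠ 0 := by
      have := hc.1.1.three_le_length; omega
    obtain ⟨y, hy⟩ := AB_exists_edge_of_mem_support c hc_len hw_sup
    have hyq : s(w, y) ∈ q.edges := by
      have : s(w, y) ∈ {e | e ∈ c.edges} := hy
      rw [← hedges] at this
      exact this
    have hwq : w ∈ q.support := Walk.fst_mem_support_of_mem_edges q hyq
    exact (hall w hwq) hw_N
  -- the induced graph on W has no odd closed walk
  have hnoWalk : ∀ (x : ↥W) (p : (G.induce W).Walk x x), ¬ Odd p.length := by
    intro x p hodd
    obtain ⟨w', q, hq_cyc, hq_odd⟩ := AB_exists_odd_cycle p hodd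
    have hinj : Function.Injective ⇑((SimpleGraph.Embedding.induce (G := G) W).toHom) := by
      simpa using (SimpleGraph.Embedding.induce (G := G) W).injective
    have hq_cyc' : (q.map (SimpleGraph.Embedding.induce (G := G) W).toHom).IsCycle :=
      (Walk.map_isCycle_iff_of_injective hinj).mpr hq_cyc
    have hq_odd' : Odd (q.map (SimpleGraph.Embedding.induce (G := G) W).toHom).length := by
      rw [Walk.length_map]; exact hq_odd
    refine noOdd _ _ hq_cyc' hq_odd' ?_
    intro y hy
    rw [Walk.support_map, List.mem_map] at hy
    obtain ⟨z, -, rfl⟩ := hy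
    exact z.2
  obtain ⟨col, hcol⟩ := AB_exists_coloring hnoWalk
  set X : Set V := {v | ∃ hv : v ∈ W, col ⟨v, hv⟩ = true} with hX
  set Y : Set V := {v | ∃ hv : v ∈ W, col ⟨v, hv⟩ = false} with hY
  have hXW : X ⊆ W := fun v hv => hv.1
  have hYW : Y ⊆ W := fun v hv => hv.1
  have hXY : X ∪ Y = W := by
    ext v
    constructor
    · rintro (hv | hv); exacts [hv.1, hv.1]
    · intro hv
      rcases Bool.eq_false_or_eq_true (col ⟨v, hv⟩) with hb | hb
      · exact Or.inl ⟨hv, hb⟩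
      · exact Or.inr ⟨hv, hb⟩
  have hXYdisj : Disjoint X Y := by
    rw [Set.disjoint_left]
    rintro v ⟨hv, hvt⟩ ⟨hv', hvf⟩
    rw [hvt] at hvf
    exact Bool.noConfusion hvf
  have hadj_ind : ∀ (a b : V) (ha : a ∈ W) (hb : b ∈ W), G.Adj a b →
      (G.induce W).Adj ⟨a, ha⟩ ⟨b, hb⟩ := fun a b ha hb hab => hab
  have hXind : AlmostBipartite.IsIndepSet G X := by
    rintro a ⟨ha, hat⟩ b ⟨hb, hbt⟩ hab
    exact hcol _ _ (hadj_ind a b ha hb hab) (by rw [hat, hbt])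
  have hYind : AlmostBipartite.IsIndepSet G Y := by
    rintro a ⟨ha, hat⟩ b ⟨hb, hbt⟩ hab
    exact hcol _ _ (hadj_ind a b ha hb hab) (by rw [hat, hbt])
  -- Hall into A
  obtain ⟨f₁, hf₁inj, hf₁⟩ := AB_hall (G := G) (D := nbhd G A) (T := A)
    (fun S hS => AB_crit_matchable hA hS)
  -- Hall from X into Y
  obtain ⟨f₂, hf₂inj, hf₂⟩ := AB_hall (G := G) (D := X) (T := Y) (by
    intro S hSX
    have hSind : AlmostBipartite.IsIndepSet G S := fun a ha b hb => hXind (hSX ha) (hSX hb)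
    have hSW : S ⊆ W := fun a ha => hXW (hSX ha)
    have h1 := AB_crit_expand hA hSind hSW
    refine h1.trans (Set.ncard_le_ncard ?_ (Set.toFinite _))
    rintro v ⟨hvN, hvW⟩
    refine ⟨hvN, ?_⟩
    have hvW' : (v : V) ∈ W := hvW
    rw [← hXY] at hvW'
    rcases hvW' with hvX | hvY
    · exfalso
      obtain ⟨s, hs, hvs⟩ := hvN
      exact hXind hvX (hSX hs) hvs
    · exact hvY)
  classical
  -- disjointness facts
  have hA_nA : Disjoint A (nbhd G A) := by
    rw [Set.disjoint_left]
    rintro a ha ⟨x, hx, hax⟩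
    exact hA.1 ha hx hax
  have hA_W : Disjoint A W := by
    rw [Set.disjoint_left]
    intro a ha haW
    exact haW (Or.inl ha)
  have hnA_W : Disjoint (nbhd G A) W := by
    rw [Set.disjoint_left]
    intro a ha haW
    exact haW (Or.inr ha)
  set D : Set V := nbhd G A ∪ X with hD
  set f : V → V := fun v => if v ∈ nbhd G A then f₁ v else f₂ v with hf
  have hfval₁ : ∀ x ∈ nbhd G A, f x = f₁ x := fun x hx => by
    simp only [hf, if_pos hx]
  have hfval₂ : ∀ x ∈ X, f x = f₂ x := fun x hx => by
    have : x ∉ nbhd G A := fun hxn => (Set.disjoint_left.mp hnA_W hxn) (hXW hx)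
    simp only [hf, if_neg this]
  have hadjD : ∀ x ∈ D, G.Adj x (f x) := by
    rintro x (hx | hx)
    · rw [hfval₁ x hx]; exact (hf₁ x hx).1
    · rw [hfval₂ x hx]; exact (hf₂ x hx).1
  have himg : ∀ x ∈ D, f x ∈ A ∪ Y := by
    rintro x (hx | hx)
    · rw [hfval₁ x hx]; exact Or.inl (hf₁ x hx).2
    · rw [hfval₂ x hx]; exact Or.inr (hf₂ x hx).2
  have hAY_D : Disjoint (A ∪ Y) D := by
    rw [Set.disjoint_left]
    rintro v (hv | hv) (hvD | hvD)
    · exact Set.disjoint_left.mp hA_nA hv hvD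
    · exact Set.disjoint_left.mp hA_W hv (hXW hvD)
    · exact Set.disjoint_left.mp hnA_W hvD (hYW hv)
    · exact Set.disjoint_left.mp hXYdisj hvD hv
  have houtD : ∀ x ∈ D, f x ∉ D := fun x hx hfx =>
    Set.disjoint_left.mp hAY_D (himg x hx) hfx
  have hinjD : Set.InjOn f D := by
    rintro a (ha | ha) b (hb | hb) hab
    · exact hf₁inj ha hb (by rwa [hfval₁ a ha, hfval₁ b hb] at hab)
    · exfalso
      rw [hfval₁ a ha, hfval₂ b hb] at hab
      have h1 : f₁ a ∈ A := (hf₁ a ha).2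
      have h2 : f₂ b ∈ Y := (hf₂ b hb).2
      rw [hab] at h1
      exact Set.disjoint_left.mp hA_W h1 (hYW h2)
    · exfalso
      rw [hfval₂ a ha, hfval₁ b hb] at hab
      have h1 : f₂ a ∈ Y := (hf₂ a ha).2
      have h2 : f₁ b ∈ A := (hf₁ b hb).2
      rw [← hab] at h2
      exact Set.disjoint_left.mp hA_W h2 (hYW h1)
    · exact hf₂inj ha hb (by rwa [hfval₂ a ha, hfval₂ b hb] at hab)
  obtain ⟨M, hM, hMcard⟩ := AB_matching_of_fn hadjD hinjD houtD
  -- the independent set A ∪ Y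
  have hSind : AlmostBipartite.IsIndepSet G (A ∪ Y) := by
    have hAY : ∀ a ∈ A, ∀ y ∈ Y, ¬ G.Adj a y := by
      intro a ha y hy hadj
      exact (hYW hy) (Or.inr ⟨a, ha, hadj.symm⟩)
    rintro a (ha | ha) b (hb | hb)
    · exact hA.1 ha hb
    · exact hAY a ha b hb
    · exact fun h => hAY b hb a ha h.symm
    · exact hYind ha hb
  -- the count
  have hcount : Nat.card V ≤ (A ∪ Y).ncard + M.edgeSet.ncard := by
    rw [hMcard]
    have e1 : (A ∪ Y).ncard = A.ncard + Y.ncard :=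
      Set.ncard_union_eq (Set.disjoint_of_subset_right hYW hA_W) (Set.toFinite _) (Set.toFinite _)
    have e2 : D.ncard = (nbhd G A).ncard + X.ncard :=
      Set.ncard_union_eq (Set.disjoint_of_subset_right hXW hnA_W) (Set.toFinite _) (Set.toFinite _)
    have e3 : (closedNbhd G A).ncard = A.ncard + (nbhd G A).ncard :=
      Set.ncard_union_eq hA_nA (Set.toFinite _) (Set.toFinite _)
    have e4 : W.ncard = X.ncard + Y.ncard := by
      rw [← hXY]
      exact Set.ncard_union_eq hXYdisj (Set.toFinite _) (Set.toFinite _)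
    have e5 : (closedNbhd G A).ncard + W.ncard = Nat.card V :=
      Set.ncard_add_ncard_compl _ (Set.toFinite _) (Set.toFinite _)
    omega
  exact AB_KE_of hSind hM hcount

end KeyLemma

end ABaux

open AlmostBipartite in
theorem AB_main {V : Type*} [Fintype V] {G : SimpleGraph V} (hG : ¬ KonigEgervary G)
    {u : V} (c : G.Walk u u) (hc : IsUniqueOddCycle G c) :
    {v | v ∈ c.support} ∩ closedNbhd G (diadem G) = ∅ ∧
    closedNbhd G {v | v ∈ c.support} ∩ diadem G = ∅ := by
  have key : ∀ A : Set V, IsCritIndep G A → ∀ v ∈ c.support, v ∉ closedNbhd G A :=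
    fun A hA => AB_key hG hc hA
  constructor
  · rw [Set.eq_empty_iff_forall_notMem]
    rintro v ⟨hv_sup, hv_N⟩
    rcases hv_N with hv | ⟨x, hx, hadj⟩
    · obtain ⟨A, hA, hvA⟩ := hv
      exact key A hA v hv_sup (Or.inl hvA)
    · obtain ⟨A, hA, hxA⟩ := hx
      exact key A hA v hv_sup (Or.inr ⟨x, hxA, hadj⟩)
  · rw [Set.eq_empty_iff_forall_notMem]
    rintro v ⟨hv_cn, hv_d⟩
    obtain ⟨A, hA, hvA⟩ := hv_d
    rcases hv_cn with hv_sup | ⟨x, hx_sup, hadj⟩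
    · exact key A hA v hv_sup (Or.inl hvA)
    · exact key A hA x hx_sup (Or.inr ⟨v, hvA, hadj.symm⟩)

/-- If `G` is an almost bipartite non-König-Egerváry graph with unique odd cycle `c`, then
`V(C) ∩ N[diadem G] = ∅`; equivalently, `N[V(C)] ∩ diadem G = ∅`. -/
theorem stmt1 {V : Type*} [Fintype V] (G : SimpleGraph V) (hG : ¬ KonigEgervary G)
    (u : V) (c : G.Walk u u) (hc : IsUniqueOddCycle G c) :
    {v | v ∈ c.support} ∩ closedNbhd G (diadem G) = ∅ ∧
    closedNbhd G {v | v ∈ c.support} ∩ diadem G = ∅ := by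
  exact AB_main hG c hc
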